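/- Let (Ω, 𝔽, ℙ) be a probability space, let J ≥ 2 and 1 ≤ K ≤ J − 1 be natural numbers, set p = K/J, and let θ, μ₀, w, ψ, m₀, m₁ be real numbers with m := m₀ + m₁ > 0. Let S₁, T₁,…,T_K, Δ_{K+1},…,Δ_J, E₁,…,E_K, G₁,…,G_K be mutually independent square-integrable real random variables with 𝔼[S₁] = θ, 𝔼[T_j] = θ for all j, 𝔼[Δ_j] = 𝔼[E_j] = 𝔼[G_j] = 0 for all j, Var(S₁) = v_s, Var(T_j) = v_t, Var(Δ_j) = v_δ, Var(E_j) = v_ε, Var(G_j) = v_γ. Define s = (m₀·μ₀ + m₁·S₁)/m, f̄ = (1 − p·w)·s + p·w·(1/K)∑_{j=1}^{K} T_j + (1−p)·(1/(J−K))∑_{j=K+1}^{J} Δ_j + p·(1/K)∑_{j=1}^{K} E_j, and ḡ = (1 − p²·w²)·s + p²·w²·(1/K)∑_{j=1}^{K} T_j + (1−p)·(1/(J−K))∑_{j=K+1}^{J} Δ_j + p²·w·(1/K)∑_{j=1}^{K} E_j + p·(1/K)∑_{j=1}^{K} G_j. Then, with A = 1 − (1+ψ)·p·w + ψ·p²·w²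 and B = (1+ψ) − ψ·p·w, 𝔼[((1+ψ)·f̄ − ψ·ḡ − θ)²] = A²·((m₀/m)²·(μ₀ − θ)² + (m₁/m)²·v_s) + (p·w²·B²/J)·v_t + ((1−p)/J)·v_δ + (p·B²/J)·v_ε + (ψ²·p/J)·v_γ. -/

import Mathlib

open MeasureTheory ProbabilityTheory

lemma second_moment_affine {Ω : Type*} [MeasurableSpace Ω] (P : Measure Ω) [IsProbabilityMeasure P]
    {ι : Type*} [Fintype ι] (X : ι → Ω → ℝ) (a : ι → ℝ) (c : ℝ)
    (hindep : iIndepFun X P)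
    (hL2 : ∀ i, MemLp (X i) 2 P) :
    ∫ ω, (c + ∑ i, a i * X i ω) ^ 2 ∂P
      = (c + ∑ i, a i * ∫ ω, X i ω ∂P) ^ 2 + ∑ i, a i ^ 2 * variance (X i) P := by
  classical
  set S : Ω → ℝ := fun ω => ∑ i, a i * X i ω with hS
  have hSfun : S = ∑ i, fun ω => a i * X i ω := by ext ω; simp [hS]
  have hSL2 : MemLp S 2 P := by
    rw [hSfun]
    exact memLp_finset_sum' _ (fun i _ => (hL2 i).const_mul (a i))
  have hμS : ∫ ω, S ω ∂P = ∑ i, a i * ∫ ω, X i ω ∂P := by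
    rw [hS, integral_finset_sum _ (fun i _ => ((hL2 i).integrable one_le_two).const_mul (a i))]
    simp [integral_const_mul]
  have hVar : variance S P = ∑ i, a i ^ 2 * variance (X i) P := by
    have := IndepFun.variance_sum (μ := P) (X := fun i ω => a i * X i ω) (s := Finset.univ)
      (fun i _ => (hL2 i).const_mul (a i))
      (fun i _ j _ hij =>
        (hindep.indepFun hij).comp (measurable_const_mul (a i)) (measurable_const_mul (a j)))
    rw [hSfun]
    simpa [variance_const_mul] using this
  have hS2 : ∫ ω, S ω ^ 2 ∂P = variance S P + (∫ ω, S ω ∂P) ^ 2 := by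
    have h := variance_eq_sub hSL2
    simp only [Pi.pow_apply] at h
    linarith
  have hint : ∫ ω, (c + S ω) ^ 2 ∂P
      = c ^ 2 + 2 * c * ∫ ω, S ω ∂P + ∫ ω, S ω ^ 2 ∂P := by
    have h1 : Integrable (fun ω => S ω ^ 2) P := by
      simpa [Pi.pow_apply] using hSL2.integrable_sq
    have h2 : Integrable S P := hSL2.integrable one_le_two
    have : ∀ ω, (c + S ω) ^ 2 = c ^ 2 + 2 * c * S ω + S ω ^ 2 := fun ω => by ring
    simp only [this]
    have hB : Integrable (fun ω => 2 * c * S ω) P := h2.const_mul _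
    have hA : Integrable (fun ω => c ^ 2 + 2 * c * S ω) P := (integrable_const _).add hB
    rw [integral_add hA h1, integral_add (integrable_const _) hB,
      integral_const, integral_const_mul]
    simp
  calc ∫ ω, (c + S ω) ^ 2 ∂P = c ^ 2 + 2 * c * ∫ ω, S ω ∂P + ∫ ω, S ω ^ 2 ∂P := hint
    _ = (c + ∫ ω, S ω ∂P) ^ 2 + variance S P := by rw [hS2]; ring
    _ = _ := by rw [hμS, hVar]


set_option maxHeartbeats 1600000 in
/-- The inner (conditional-on-θ) expected squared error of the pivoted estimator
`θ̂_ψ = (1+ψ)f̄ - ψḡ` in the nested-symmetric model. The family of signals and errors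
`S₁, T₁,…,T_K, Δ_{K+1},…,Δ_J, E₁,…,E_K, G₁,…,G_K` is mutually independent and
square-integrable, with the stated means and variances. -/
theorem pivoted_estimator_mse {Ω : Type*} [MeasurableSpace Ω] (P : Measure Ω)
    [IsProbabilityMeasure P]
    (J K : ℕ) (hJ : 2 ≤ J) (hK : 1 ≤ K) (hKJ : K ≤ J - 1)
    (θ μ₀ w ψ m₀ m₁ : ℝ) (hm : 0 < m₀ + m₁)
    (S₁ : Ω → ℝ) (T : Fin K → Ω → ℝ) (Δ : Fin (J - K) → Ω → ℝ)
    (E G : Fin K → Ω → ℝ)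
    (v_s v_t v_δ v_ε v_γ : ℝ)
    (hindep : iIndepFun
      (Sum.elim (fun _ : Unit => S₁) (Sum.elim T (Sum.elim Δ (Sum.elim E G)))) P)
    (hS₁L2 : MemLp S₁ 2 P) (hTL2 : ∀ j, MemLp (T j) 2 P)
    (hΔL2 : ∀ j, MemLp (Δ j) 2 P) (hEL2 : ∀ j, MemLp (E j) 2 P)
    (hGL2 : ∀ j, MemLp (G j) 2 P)
    (hS₁m : ∫ ω, S₁ ω ∂P = θ) (hTm : ∀ j, ∫ ω, T j ω ∂P = θ)
    (hΔm : ∀ j, ∫ ω, Δ j ω ∂P = 0) (hEm : ∀ j, ∫ ω, E j ω ∂P = 0)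
    (hGm : ∀ j, ∫ ω, G j ω ∂P = 0)
    (hSv : variance S₁ P = v_s) (hTv : ∀ j, variance (T j) P = v_t)
    (hΔv : ∀ j, variance (Δ j) P = v_δ) (hEv : ∀ j, variance (E j) P = v_ε)
    (hGv : ∀ j, variance (G j) P = v_γ) :
    let p : ℝ := (K : ℝ) / J
    let m : ℝ := m₀ + m₁
    let A : ℝ := 1 - (1 + ψ) * p * w + ψ * p ^ 2 * w ^ 2
    let B : ℝ := (1 + ψ) - ψ * p * w
    let s : Ω → ℝ := fun ω => (m₀ * μ₀ + m₁ * S₁ ω) / m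
    let fbar : Ω → ℝ := fun ω =>
      (1 - p * w) * s ω + p * w * ((1 / (K : ℝ)) * ∑ j, T j ω)
        + (1 - p) * ((1 / ((J : ℝ) - K)) * ∑ j, Δ j ω)
        + p * ((1 / (K : ℝ)) * ∑ j, E j ω)
    let gbar : Ω → ℝ := fun ω =>
      (1 - p ^ 2 * w ^ 2) * s ω + p ^ 2 * w ^ 2 * ((1 / (K : ℝ)) * ∑ j, T j ω)
        + (1 - p) * ((1 / ((J : ℝ) - K)) * ∑ j, Δ j ω)
        + p ^ 2 * w * ((1 / (K : ℝ)) * ∑ j, E j ω)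
        + p * ((1 / (K : ℝ)) * ∑ j, G j ω)
    ∫ ω, ((1 + ψ) * fbar ω - ψ * gbar ω - θ) ^ 2 ∂P
      = A ^ 2 * ((m₀ / m) ^ 2 * (μ₀ - θ) ^ 2 + (m₁ / m) ^ 2 * v_s)
        + (p * w ^ 2 * B ^ 2 / (J : ℝ)) * v_t
        + ((1 - p) / (J : ℝ)) * v_δ
        + (p * B ^ 2 / (J : ℝ)) * v_ε
        + (ψ ^ 2 * p / (J : ℝ)) * v_γ := by
  intro p m A B s fbar gbar
  have hKJ' : K < J := by omega
  have hKr : (0:ℝ) < (K:ℝ) := by exact_mod_cast hK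
  have hJr : (0:ℝ) < (J:ℝ) := by positivity
  have hJKc : ((J - K : ℕ) : ℝ) = (J:ℝ) - K := by
    push_cast [Nat.cast_sub hKJ'.le]; ring
  have hJKr : (0:ℝ) < (J:ℝ) - K := by
    have : (K:ℝ) < J := by exact_mod_cast hKJ'
    linarith
  have hmne : m ≠ 0 := ne_of_gt hm
  set X := Sum.elim (fun _ : Unit => S₁) (Sum.elim T (Sum.elim Δ (Sum.elim E G))) with hX
  set a : Unit ⊕ (Fin K ⊕ (Fin (J - K) ⊕ (Fin K ⊕ Fin K))) → ℝ :=
    Sum.elim (fun _ => A * m₁ / m)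
      (Sum.elim (fun _ => p * w * B / K)
        (Sum.elim (fun _ => (1 - p) / ((J:ℝ) - K))
          (Sum.elim (fun _ => p * B / K) (fun _ => -(ψ * p) / K)))) with ha
  set c : ℝ := A * m₀ * μ₀ / m - (A + p * w * B) * θ with hc
  have hL2 : ∀ i, MemLp (X i) 2 P := by
    rintro (u | j | j | j | j)
    exacts [hS₁L2, hTL2 j, hΔL2 j, hEL2 j, hGL2 j]
  have hsum : ∀ ω, (∑ i, a i * X i ω)
      = (A * m₁ / m) * S₁ ω + (p * w * B / K) * ∑ j, T j ω
        + ((1 - p) / ((J:ℝ) - K)) * ∑ j, Δ j ω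
        + (p * B / K) * ∑ j, E j ω + (-(ψ * p) / K) * ∑ j, G j ω := by
    intro ω
    simp [ha, hX, Fintype.sum_sum_type, Finset.mul_sum]
    ring
  have key : ∀ ω, ((1 + ψ) * fbar ω - ψ * gbar ω - θ) = c + ∑ i, a i * X i ω := by
    intro ω
    rw [hsum ω, hc]
    simp only [fbar, gbar, s, A, B, p, m]
    field_simp
    ring
  have hmain : ∫ ω, ((1 + ψ) * fbar ω - ψ * gbar ω - θ) ^ 2 ∂P
      = (c + ∑ i, a i * ∫ ω, X i ω ∂P) ^ 2 + ∑ i, a i ^ 2 * variance (X i) P := by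
    rw [show (∫ ω, ((1 + ψ) * fbar ω - ψ * gbar ω - θ) ^ 2 ∂P)
        = ∫ ω, (c + ∑ i, a i * X i ω) ^ 2 ∂P from by
      congr 1; funext ω; rw [key ω]]
    exact second_moment_affine P X a c hindep hL2
  have hmean : (c + ∑ i, a i * ∫ ω, X i ω ∂P) = A * (m₀ / m) * (μ₀ - θ) := by
    rw [hc]
    simp only [ha, hX, Fintype.sum_sum_type]
    simp [hS₁m, hTm, hΔm, hEm, hGm, Finset.sum_const, Finset.card_univ]
    simp only [p, A, B, m]
    field_simp
    ring
  have hvar : (∑ i, a i ^ 2 * variance (X i) P)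
      = A ^ 2 * (m₁ / m) ^ 2 * v_s
        + (p * w ^ 2 * B ^ 2 / (J : ℝ)) * v_t
        + ((1 - p) / (J : ℝ)) * v_δ
        + (p * B ^ 2 / (J : ℝ)) * v_ε
        + (ψ ^ 2 * p / (J : ℝ)) * v_γ := by
    simp only [ha, hX, Fintype.sum_sum_type]
    simp [hSv, hTv, hΔv, hEv, hGv, Finset.sum_const, Finset.card_univ, hJKc]
    simp only [p, B, A]
    field_simp
    ring
  rw [hmain, hmean, hvar]
  ring
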